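/- The number of 2-cycles on the set {1,...,n} equals 2^{C(n-1,3)}, where C(n-1,3) is the binomial coefficient (n-1 choose 3). -/

import Mathlib

/-- A 2-cycle on `{1,...,n}` is a set `C` of 3-element subsets of `{1,...,n}` such that
every 2-element subset is contained in an even number of members of `C`. -/
def IsTwoCycle (n : ℕ) (C : Finset (Finset (Fin n))) : Prop :=
  (∀ f ∈ C, f.card = 3) ∧
  ∀ p : Finset (Fin n), p.card = 2 → Even (C.filter (fun f => p ⊆ f)).card

namespace TwoCycleAux

open Finset

variable {m : ℕ}

/-- Triples avoiding the last vertex. -/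
def tcS (m : ℕ) : Finset (Finset (Fin (m+1))) :=
  ((univ : Finset (Fin (m+1))).erase (Fin.last m)).powersetCard 3

/-- Pairs avoiding the last vertex. -/
def tcP (m : ℕ) : Finset (Finset (Fin (m+1))) :=
  ((univ : Finset (Fin (m+1))).erase (Fin.last m)).powersetCard 2

def oddPairs (m : ℕ) (T : Finset (Finset (Fin (m+1)))) : Finset (Finset (Fin (m+1))) :=
  (tcP m).filter fun p => ¬ Even ((T.filter fun f => p ⊆ f).card)

def liftT (m : ℕ) (T : Finset (Finset (Fin (m+1)))) : Finset (Finset (Fin (m+1))) :=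
  T ∪ (oddPairs m T).image (insert (Fin.last m))

lemma mem_tcS {f : Finset (Fin (m+1))} : f ∈ tcS m ↔ f.card = 3 ∧ Fin.last m ∉ f := by
  simp [tcS, mem_powersetCard, subset_erase, subset_univ, and_comm]

lemma mem_tcP {p : Finset (Fin (m+1))} : p ∈ tcP m ↔ p.card = 2 ∧ Fin.last m ∉ p := by
  simp [tcP, mem_powersetCard, subset_erase, subset_univ, and_comm]

/-- Key membership lemma. -/
lemma mem_of_twoCycle {C : Finset (Finset (Fin (m+1)))} (hC : IsTwoCycle (m+1) C)
    {p : Finset (Fin (m+1))} (hp : p.card = 2) (hv : Fin.last m ∉ p) :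
    insert (Fin.last m) p ∈ C ↔
      ¬ Even (((C.filter fun f => Fin.last m ∉ f).filter fun f => p ⊆ f).card) := by
  set v := Fin.last m with hvdef
  have hA := hC.2 p hp
  set A := C.filter fun f => p ⊆ f with hAdef
  have hcard : A.card = (A.filter fun f => v ∈ f).card + (A.filter fun f => ¬ (v ∈ f)).card := by
    rw [← card_union_of_disjoint (disjoint_filter_filter_not A A _),
      filter_union_filter_not_eq]
  have h1 : (A.filter fun f => v ∈ f).card = if insert v p ∈ C then 1 else 0 := by
    have hset : (A.filter fun f => v ∈ f) = if insert v p ∈ C then {insert v p} else ∅ := by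
      ext g
      rw [mem_filter, hAdef, mem_filter]
      constructor
      · rintro ⟨⟨hgC, hpg⟩, hvg⟩
        have hsub : insert v p ⊆ g := insert_subset hvg hpg
        have hge : insert v p = g := eq_of_subset_of_card_le hsub
          (by rw [card_insert_of_notMem hv, hp, hC.1 g hgC])
        rw [if_pos (hge ▸ hgC), mem_singleton, hge]
      · intro hg
        by_cases hmem : insert v p ∈ C
        · rw [if_pos hmem, mem_singleton] at hg
          subst hg
          exact ⟨⟨hmem, subset_insert _ _⟩, mem_insert_self _ _⟩
        · rw [if_neg hmem] at hg
          exact absurd hg (notMem_empty g)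
    rw [hset]
    split <;> simp
  have h2 : (A.filter fun f => ¬ (v ∈ f)) = (C.filter fun f => v ∉ f).filter fun f => p ⊆ f := by
    rw [hAdef, filter_comm]
  rw [← h2]
  by_cases hmem : insert v p ∈ C
  · simp only [hmem, if_pos, true_iff]
    intro hX
    rw [Nat.even_iff] at hA hX
    rw [hcard, h1, if_pos hmem] at hA
    omega
  · simp only [hmem, false_iff, not_not]
    rw [hcard, h1, if_neg hmem] at hA
    rw [Nat.even_iff] at hA ⊢
    omega

lemma even_oddPairs_filter {T : Finset (Finset (Fin (m+1)))} (hT : T ⊆ tcS m)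
    (a : Fin (m+1)) :
    Even (((oddPairs m T).filter fun p => a ∈ p).card) := by
  set v := Fin.last m with hvdef
  rw [← ZMod.natCast_eq_zero_iff_even]
  have h1 : ((((oddPairs m T).filter fun p => a ∈ p).card : ZMod 2))
      = ∑ p ∈ (tcP m).filter (fun p => a ∈ p), ((T.filter fun f => p ⊆ f).card : ZMod 2) := by
    rw [oddPairs, filter_comm, natCast_card_filter]
    refine Finset.sum_congr rfl fun p _ => ?_
    by_cases hpe : Even ((T.filter fun f => p ⊆ f).card)
    · rw [if_neg (not_not.2 hpe), (ZMod.natCast_eq_zero_iff_even).2 hpe]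
    · rw [if_pos hpe, ((ZMod.natCast_eq_one_iff_odd).2 (Nat.not_even_iff_odd.1 hpe)).symm]
  have h2 : ∀ p : Finset (Fin (m+1)), ((T.filter fun f => p ⊆ f).card : ZMod 2)
      = ∑ t ∈ T, if p ⊆ t then (1 : ZMod 2) else 0 := fun p => natCast_card_filter _ _
  rw [h1]
  calc ∑ p ∈ (tcP m).filter (fun p => a ∈ p), ((T.filter fun f => p ⊆ f).card : ZMod 2)
      = ∑ p ∈ (tcP m).filter (fun p => a ∈ p), ∑ t ∈ T, if p ⊆ t then (1 : ZMod 2) else 0 :=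
        Finset.sum_congr rfl fun p _ => h2 p
    _ = ∑ t ∈ T, ∑ p ∈ (tcP m).filter (fun p => a ∈ p), if p ⊆ t then (1 : ZMod 2) else 0 :=
        Finset.sum_comm
    _ = ∑ t ∈ T, ((((tcP m).filter (fun p => a ∈ p)).filter fun p => p ⊆ t).card : ZMod 2) :=
        Finset.sum_congr rfl fun t _ => (natCast_card_filter _ _).symm
    _ = 0 := by
        rw [← Finset.sum_const_zero (s := T)]
        refine Finset.sum_congr rfl fun t ht => ?_
        rw [ZMod.natCast_eq_zero_iff_even]
        have htS := mem_tcS.1 (hT ht)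
        by_cases hat : a ∈ t
        · have hset : (((tcP m).filter (fun p => a ∈ p)).filter fun p => p ⊆ t)
              = (t.erase a).image (fun b => insert a {b}) := by
            ext p
            simp only [mem_filter, mem_tcP, mem_image, mem_erase]
            constructor
            · rintro ⟨⟨⟨hp2, hpv⟩, hap⟩, hpt⟩
              obtain ⟨b, hb⟩ : ∃ b, p.erase a = {b} :=
                card_eq_one.1 (by rw [card_erase_of_mem hap, hp2])
              have hbp : b ∈ p := (erase_subset a p) (hb ▸ mem_singleton_self b)
              have hba : b ≠ a := by
                have : b ∈ p.erase a := hb ▸ mem_singleton_self b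
                exact (mem_erase.1 this).1
              exact ⟨b, ⟨hba, hpt hbp⟩, by rw [← hb, insert_erase hap]⟩
            · rintro ⟨b, ⟨hba, hbt⟩, rfl⟩
              have hsub : insert a {b} ⊆ t := by
                intro x hx
                rcases mem_insert.1 hx with rfl | hx
                · exact hat
                · exact (mem_singleton.1 hx) ▸ hbt
              refine ⟨⟨⟨?_, fun hvmem => htS.2 (hsub hvmem)⟩, mem_insert_self _ _⟩, hsub⟩
              rw [card_insert_of_notMem (by simp [Ne.symm hba]), card_singleton]
          rw [hset, card_image_of_injOn]
          · rw [card_erase_of_mem hat, htS.1]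
            decide
          · intro b hb c hc hbc
            have hb' : b ∈ insert a ({c} : Finset (Fin (m+1))) := by
              have : b ∈ insert a ({b} : Finset (Fin (m+1))) :=
                mem_insert_of_mem (mem_singleton_self b)
              simpa only [show insert a ({b} : Finset (Fin (m+1))) = insert a {c} from hbc]
                using this
            rcases mem_insert.1 hb' with h | h
            · exact absurd h (mem_erase.1 (mem_coe.1 hb)).1
            · exact mem_singleton.1 h
        · have hset : (((tcP m).filter (fun p => a ∈ p)).filter fun p => p ⊆ t) = ∅ := by
            rw [filter_eq_empty_iff]
            rintro p hp hpt
            exact hat (hpt (mem_filter.1 hp).2)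
          rw [hset, card_empty]
          exact Even.zero

lemma liftT_isTwoCycle {T : Finset (Finset (Fin (m+1)))} (hT : T ⊆ tcS m) :
    IsTwoCycle (m+1) (liftT m T) := by
  set v := Fin.last m with hvdef
  have hTv : ∀ f ∈ T, v ∉ f := fun f hf => (mem_tcS.1 (hT hf)).2
  have hT3 : ∀ f ∈ T, f.card = 3 := fun f hf => (mem_tcS.1 (hT hf)).1
  have hinj : Set.InjOn (insert v) ((oddPairs m T : Set (Finset (Fin (m+1))))) := by
    intro p hp q hq h
    have hpv : v ∉ p := (mem_tcP.1 (mem_filter.1 (mem_coe.1 hp)).1).2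
    have hqv : v ∉ q := (mem_tcP.1 (mem_filter.1 (mem_coe.1 hq)).1).2
    rw [← erase_insert hpv (a := v), ← erase_insert hqv (a := v), h]
  have hdisj : Disjoint T ((oddPairs m T).image (insert v)) := by
    rw [disjoint_left]
    rintro f hfT hfI
    obtain ⟨p, hp, rfl⟩ := mem_image.1 hfI
    exact hTv _ hfT (mem_insert_self _ _)
  constructor
  · intro f hf
    rcases mem_union.1 hf with hf | hf
    · exact hT3 f hf
    · obtain ⟨p, hp, rfl⟩ := mem_image.1 hf
      have hpP := mem_tcP.1 (mem_filter.1 hp).1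
      rw [card_insert_of_notMem hpP.2, hpP.1]
  · intro q hq
    rw [liftT, filter_union,
      card_union_of_disjoint (disjoint_filter_filter hdisj)]
    by_cases hvq : v ∈ q
    · -- pairs through the apex
      have h1 : T.filter (fun f => q ⊆ f) = ∅ := by
        rw [filter_eq_empty_iff]
        intro f hf hsub
        exact hTv f hf (hsub hvq)
      rw [h1, card_empty, zero_add]
      obtain ⟨a, ha⟩ : ∃ a, q.erase v = {a} :=
        card_eq_one.1 (by rw [card_erase_of_mem hvq, hq])
      have himg : ((oddPairs m T).image (insert v)).filter (fun f => q ⊆ f)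
          = ((oddPairs m T).filter (fun p => a ∈ p)).image (insert v) := by
        rw [filter_image]
        congr 1
        refine filter_congr fun p hp => ?_
        rw [subset_insert_iff, ha, singleton_subset_iff]
      rw [himg, card_image_of_injOn (hinj.mono (by exact_mod_cast filter_subset _ _))]
      exact even_oddPairs_filter hT a
    · -- pairs away from the apex
      have hqP : q ∈ tcP m := mem_tcP.2 ⟨hq, hvq⟩
      have himg : ((oddPairs m T).image (insert v)).filter (fun f => q ⊆ f)
          = if q ∈ oddPairs m T then {insert v q} else ∅ := by
        ext f
        simp only [mem_filter, mem_image]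
        constructor
        · rintro ⟨⟨p, hp, rfl⟩, hqf⟩
          have hpP := mem_tcP.1 (mem_filter.1 hp).1
          have hqp : q ⊆ p := by
            intro x hx
            rcases mem_insert.1 (hqf hx) with h | h
            · exact absurd (h ▸ hx) hvq
            · exact h
          have hqp' : q = p := eq_of_subset_of_card_le hqp (by rw [hpP.1, hq])
          subst hqp'
          rw [if_pos hp, mem_singleton]
        · intro hf
          by_cases hqodd : q ∈ oddPairs m T
          · rw [if_pos hqodd, mem_singleton] at hf
            subst hf
            exact ⟨⟨q, hqodd, rfl⟩, subset_insert _ _⟩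
          · rw [if_neg hqodd] at hf
            exact absurd hf (notMem_empty f)
      rw [himg]
      by_cases hqodd : q ∈ oddPairs m T
      · rw [if_pos hqodd, card_singleton]
        have hodd := (mem_filter.1 hqodd).2
        rw [Nat.not_even_iff] at hodd
        rw [Nat.even_iff]
        omega
      · rw [if_neg hqodd, card_empty, add_zero]
        by_contra hne
        exact hqodd (mem_filter.2 ⟨hqP, hne⟩)

lemma filter_liftT {T : Finset (Finset (Fin (m+1)))} (hT : T ⊆ tcS m) :
    (liftT m T).filter (fun f => Fin.last m ∉ f) = T := by
  ext f
  simp only [liftT, mem_filter, mem_union, mem_image]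
  constructor
  · rintro ⟨hf | ⟨p, hp, rfl⟩, hvf⟩
    · exact hf
    · exact absurd (mem_insert_self _ _) hvf
  · intro hf
    exact ⟨Or.inl hf, (mem_tcS.1 (hT hf)).2⟩

lemma liftT_filter {C : Finset (Finset (Fin (m+1)))} (hC : IsTwoCycle (m+1) C) :
    liftT m (C.filter fun f => Fin.last m ∉ f) = C := by
  set v := Fin.last m with hvdef
  ext f
  simp only [liftT, mem_union, mem_image]
  by_cases hv : v ∈ f
  · constructor
    · rintro (hf | ⟨p, hp, rfl⟩)
      · exact absurd hv (mem_filter.1 hf).2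
      · rw [oddPairs, mem_filter, mem_tcP] at hp
        exact (mem_of_twoCycle hC hp.1.1 hp.1.2).2 hp.2
    · intro hfC
      right
      have hcard3 := hC.1 f hfC
      have hp2 : (f.erase v).card = 2 := by rw [card_erase_of_mem hv, hcard3]
      have hins : insert v (f.erase v) = f := insert_erase hv
      refine ⟨f.erase v, ?_, hins⟩
      rw [oddPairs, mem_filter, mem_tcP]
      exact ⟨⟨hp2, notMem_erase _ _⟩,
        (mem_of_twoCycle hC hp2 (notMem_erase _ _)).1 (by rw [hins]; exact hfC)⟩
  · constructor
    · rintro (hf | ⟨p, hp, rfl⟩)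
      · exact (mem_filter.1 hf).1
      · exact absurd (mem_insert_self _ _) hv
    · intro hfC
      exact Or.inl (mem_filter.2 ⟨hfC, hv⟩)

end TwoCycleAux

/-- The number of 2-cycles on `{1,...,n}` equals `2 ^ (n-1 choose 3)`. -/
theorem card_twoCycles (n : ℕ) :
    Nat.card {C : Finset (Finset (Fin n)) // IsTwoCycle n C}
      = 2 ^ Nat.choose (n - 1) 3 := by
  open Finset TwoCycleAux in
  match n with
  | 0 =>
    have huniq : ∀ C : Finset (Finset (Fin 0)), IsTwoCycle 0 C ↔ C = ∅ := by
      intro C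
      constructor
      · rintro ⟨h1, -⟩
        ext f
        simp only [Finset.notMem_empty, iff_false]
        intro hf
        have := h1 f hf
        have : f.card ≤ (univ : Finset (Fin 0)).card := Finset.card_le_card (Finset.subset_univ f)
        simp_all
      · rintro rfl
        exact ⟨by simp, by intro p hp; simp⟩
    have : Unique {C : Finset (Finset (Fin 0)) // IsTwoCycle 0 C} :=
      ⟨⟨⟨∅, (huniq ∅).2 rfl⟩⟩, fun C => Subtype.ext (by simpa using (huniq C.1).1 C.2)⟩
    simp [Nat.card_unique]
  | (m+1) =>
    have e : {C : Finset (Finset (Fin (m+1))) // IsTwoCycle (m+1) C} ≃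
        {T // T ∈ (tcS m).powerset} :=
      { toFun := fun C => ⟨C.1.filter (fun f => Fin.last m ∉ f), by
          rw [Finset.mem_powerset]
          intro f hf
          simp only [Finset.mem_filter] at hf
          exact mem_tcS.2 ⟨C.2.1 f hf.1, hf.2⟩⟩
        invFun := fun T => ⟨liftT m T.1, liftT_isTwoCycle (Finset.mem_powerset.1 T.2)⟩
        left_inv := fun C => Subtype.ext (liftT_filter C.2)
        right_inv := fun T => Subtype.ext (filter_liftT (Finset.mem_powerset.1 T.2)) }
    rw [Nat.card_congr e]
    have : Nat.card {T // T ∈ (tcS m).powerset} = (tcS m).powerset.card :=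
      Nat.card_eq_finsetCard _
    rw [this, Finset.card_powerset]
    have hS : (tcS m).card = Nat.choose m 3 := by
      rw [tcS, Finset.card_powersetCard]
      congr 1
      rw [Finset.card_erase_of_mem (Finset.mem_univ _)]
      simp
    simp [hS]
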